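/- For all integers k', i, k, t with 0 ≤ 2k' < i ≤ k and for a nondecreasing function w : ℕ → ℕ, define W(k', i) = i·(i - 2k')·(w(i) + 2k). Then for any decomposition i = i_1 + i_2 with 1 ≤ i_1, i_2 ≤ i - 1 and integers k'_1, k'_2 with 2k'_1 ≤ i_1, 2k'_2 ≤ i_2, 2(k'_1 + k'_2) < i, we have W(k'_1, i_1) + W(k'_2, i_2) + w(i) + 2(k - i) ≤ W(k'_1 + k'_2, i). -/
import Mathlib


/-- The potential-function inequality from the proof of Theorem 4.2: with
`W k' j = j·(j - 2k')·(w j + 2k)` for a nondecreasing `w`, if `i = i₁ + i₂` with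
`1 ≤ i₁, i₂ ≤ i - 1`, `2k'₁ ≤ i₁`, `2k'₂ ≤ i₂` and `2(k'₁ + k'₂) < i`, then
`W k'₁ i₁ + W k'₂ i₂ + w i + 2(k - i) ≤ W (k'₁ + k'₂) i`. -/
theorem stmt_16 (k' i k t i₁ i₂ k'₁ k'₂ : ℕ) (w : ℕ → ℕ) (hw : Monotone w)
    (h1 : 2 * k' < i) (h2 : i ≤ k)
    (hi : i = i₁ + i₂) (hi₁ : 1 ≤ i₁) (hi₂ : 1 ≤ i₂)
    (hi₁' : i₁ ≤ i - 1) (hi₂' : i₂ ≤ i - 1)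
    (hk₁ : 2 * k'₁ ≤ i₁) (hk₂ : 2 * k'₂ ≤ i₂)
    (hks : 2 * (k'₁ + k'₂) < i) :
    (i₁ * (i₁ - 2 * k'₁) * (w i₁ + 2 * k)) + (i₂ * (i₂ - 2 * k'₂) * (w i₂ + 2 * k)) +
        w i + 2 * (k - i)
      ≤ i * (i - 2 * (k'₁ + k'₂)) * (w i + 2 * k) := by
  have hw1 : w i₁ ≤ w i := hw (by omega)
  have hw2 : w i₂ ≤ w i := hw (by omega)
  have hks' : 2 * (k'₁ + k'₂) ≤ i := by omega
  zify [hk₁, hk₂, h2, hks']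
  set a : ℤ := (i₁ : ℤ) - 2 * k'₁ with ha
  set b : ℤ := (i₂ : ℤ) - 2 * k'₂ with hb
  set c : ℤ := (w i : ℤ) + 2 * k with hc
  have hA : (0:ℤ) ≤ a := by omega
  have hB : (0:ℤ) ≤ b := by omega
  have hab : (1:ℤ) ≤ a + b := by omega
  have hc1 : (1:ℤ) ≤ c := by omega
  have key : (1:ℤ) ≤ (i₁:ℤ) * b + (i₂:ℤ) * a := by nlinarith [hi₁, hi₂]
  have h3 : ((i:ℤ)) = (i₁:ℤ) + i₂ := by exact_mod_cast congrArg Nat.cast hi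
  calc (i₁:ℤ) * a * ((w i₁:ℤ) + 2 * k) + (i₂:ℤ) * b * ((w i₂:ℤ) + 2 * k) + (w i:ℤ) + 2 * ((k:ℤ) - i)
      ≤ (i₁:ℤ) * a * c + (i₂:ℤ) * b * c + c := by
        have t1 : (i₁:ℤ) * a * ((w i₁:ℤ) + 2 * k) ≤ (i₁:ℤ) * a * c := by
          apply mul_le_mul_of_nonneg_left (by omega) (by positivity)
        have t2 : (i₂:ℤ) * b * ((w i₂:ℤ) + 2 * k) ≤ (i₂:ℤ) * b * c := by
          apply mul_le_mul_of_nonneg_left (by omega) (by positivity)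
        omega
    _ ≤ (i₁:ℤ) * a * c + (i₂:ℤ) * b * c + ((i₁:ℤ) * b + (i₂:ℤ) * a) * c := by nlinarith
    _ = (i:ℤ) * ((i:ℤ) - 2 * ((k'₁:ℤ) + k'₂)) * c := by rw [h3]; ring
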